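/- Let η₁, ..., ηₙ (n ≥ 2) be pairwise distinct vectors in a real inner product space with ⟨ηᵢ, ηⱼ⟩ = κ for all i ≠ j, where κ < 0. Then ‖ηᵢ‖² ≠ κ trivially for all i, and the vectors η₁, ..., ηₙ span a subspace of dimension at least n - 1. -/

import Mathlib

open RealInnerProductSpace

/-- Pairwise distinct vectors η₁, ..., ηₙ (n ≥ 2) with pairwise inner
products κ < 0 satisfy ‖ηᵢ‖² ≠ κ and span a subspace of dimension ≥ n - 1. -/
theorem stmt9 {E : Type*} [NormedAddCommGroup E] [InnerProductSpace ℝ E]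
    {n : ℕ} (hn : 2 ≤ n) (η : Fin n → E) (κ : ℝ) (hκ : κ < 0)
    (hdist : Function.Injective η)
    (hinner : ∀ i j, i ≠ j → ⟪η i, η j⟫ = κ) :
    (∀ i, ‖η i‖ ^ 2 ≠ κ) ∧
    n - 1 ≤ Module.finrank ℝ (Submodule.span ℝ (Set.range η)) := by
  classical
  have hnorm : ∀ i, κ < ‖η i‖ ^ 2 := fun i => lt_of_lt_of_le hκ (by positivity)
  refine ⟨fun i => (hnorm i).ne', ?_⟩
  set T : (Fin n → ℝ) →ₗ[ℝ] E := Fintype.linearCombination ℝ η with hT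
  have hrange : LinearMap.range T = Submodule.span ℝ (Set.range η) :=
    Fintype.range_linearCombination ℝ η
  -- any kernel element with zero coordinate sum is zero
  have hker : ∀ c ∈ LinearMap.ker T, (∑ i, c i) = 0 → c = 0 := by
    intro c hc hS
    have hTc : (∑ i, c i • η i) = 0 := by
      have := (LinearMap.mem_ker).1 hc
      simpa [hT, Fintype.linearCombination_apply] using this
    funext j
    have h0 : ⟪(∑ i, c i • η i), η j⟫ = 0 := by rw [hTc]; simp
    have hexp : ⟪(∑ i, c i • η i), η j⟫ =
        ∑ i, c i * ⟪η i, η j⟫ := by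
      rw [sum_inner]; simp [real_inner_smul_left]
    have hsplit : (∑ i, c i * ⟪η i, η j⟫) =
        c j * ‖η j‖ ^ 2 + ∑ i ∈ Finset.univ.erase j, c i * κ := by
      rw [← Finset.add_sum_erase _ _ (Finset.mem_univ j),
        real_inner_self_eq_norm_sq]
      congr 1
      exact Finset.sum_congr rfl fun i hi =>
        by rw [hinner i j (Finset.ne_of_mem_erase hi)]
    have herase : (∑ i ∈ Finset.univ.erase j, c i * κ) = (-(c j)) * κ := by
      rw [← Finset.sum_mul]
      have : (∑ i ∈ Finset.univ.erase j, c i) = -(c j) := by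
        have := Finset.add_sum_erase Finset.univ c (Finset.mem_univ j)
        linarith [hS, this]
      rw [this]
    have hfinal : c j * (‖η j‖ ^ 2 - κ) = 0 := by
      have := h0
      rw [hexp, hsplit, herase] at this
      ring_nf at this ⊢
      linarith
    have hpos : ‖η j‖ ^ 2 - κ ≠ 0 := by have := hnorm j; linarith
    have := mul_eq_zero.1 hfinal
    tauto
  -- the coordinate-sum functional restricted to the kernel is injective
  let Sf : (Fin n → ℝ) →ₗ[ℝ] ℝ :=
    { toFun := fun c => ∑ i, c i
      map_add' := by intro x y; simp [Finset.sum_add_distrib]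
      map_smul' := by intro r x; simp [Finset.mul_sum] }
  let L : LinearMap.ker T →ₗ[ℝ] ℝ := Sf.comp (LinearMap.ker T).subtype
  have hLinj : Function.Injective L := by
    rw [← LinearMap.ker_eq_bot]
    rw [LinearMap.ker_eq_bot']
    rintro ⟨c, hc⟩ hLc
    have : c = 0 := hker c hc (by simpa [L, Sf] using hLc)
    exact Subtype.ext this
  have hkerle : Module.finrank ℝ (LinearMap.ker T) ≤ 1 := by
    have := LinearMap.finrank_le_finrank_of_injective hLinj
    simpa using this
  have hrn : Module.finrank ℝ (LinearMap.range T) +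
      Module.finrank ℝ (LinearMap.ker T) = n := by
    rw [LinearMap.finrank_range_add_finrank_ker T]
    simp
  rw [← hrange]
  omega
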